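/- Let H be a connected multigraph on a finite vertex set V with root r ∈ V, and suppose e = {a,b} is a bridge of H: μ(a,b) = 1 and deleting the edge {a,b} disconnects the support graph into two connected pieces, with vertex sets V₁ ∋ r, a and V₂ ∋ b. Let H₁ and H₂ be the multigraphs obtained by restricting μ to V₁ and to V₂ respectively. Then Q_{H,r}(q) = Q_{H₁,r}(q) · Q_{H₂,b}(q); equivalently, in terms of the paper's generating functions P = q^{−1}Q, one has P_{H,r}(q) = q · P_{H₁,r}(q) · P_{H₂,b}(q). -/

import Mathlib

open scoped Classical

/-- Out-degree of vertex `i` with respect to a vertex subset `I`. -/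
def outdeg {V : Type*} [Fintype V] [DecidableEq V] (μ : V → V → ℕ)
    (I : Finset V) (i : V) : ℕ :=
  ∑ j ∈ Iᶜ, μ i j

/-- An `(H,r)`-parking function of the multigraph `μ` rooted at `r`. -/
def IsParking {V : Type*} [Fintype V] [DecidableEq V] (μ : V → V → ℕ) (r : V)
    (f : V → ℤ) : Prop :=
  f r = -1 ∧ (∀ v, v ≠ r → 0 ≤ f v) ∧
  ∀ I : Finset V, I.Nonempty → r ∉ I → ∃ i ∈ I, f i < (outdeg μ I i : ℤ)

/-- The generating polynomial `Q_{H,r}(q) = Σ_f q^{Σ_{v ≠ r} f(v)}` of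
`(H,r)`-parking functions. -/
noncomputable def Qpoly {V : Type*} [Fintype V] [DecidableEq V] (μ : V → V → ℕ)
    (r : V) : Polynomial ℤ :=
  ∑ᶠ f ∈ {f : V → ℤ | IsParking μ r f},
    (Polynomial.X : Polynomial ℤ) ^ (∑ v ∈ Finset.univ.erase r, f v).toNat

/-- The simple support graph of the multigraph `μ`. -/
def supportGraph {V : Type*} (μ : V → V → ℕ) : SimpleGraph V where
  Adj i j := i ≠ j ∧ 1 ≤ μ i j ∧ 1 ≤ μ j i
  symm := ⟨fun i j h => ⟨h.1.symm, h.2.2, h.2.1⟩⟩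
  loopless := ⟨fun i h => h.1 rfl⟩

/-- The multigraph obtained by deleting one copy of the edge `{a,b}`. -/
def deleteEdge {V : Type*} [DecidableEq V] (μ : V → V → ℕ) (a b : V) : V → V → ℕ :=
  fun u v => μ u v - if (u = a ∧ v = b) ∨ (u = b ∧ v = a) then 1 else 0

private lemma parking_finite {V : Type*} [Fintype V] [DecidableEq V] (μ : V → V → ℕ) (r : V) :
    {f : V → ℤ | IsParking μ r f}.Finite := by
  classical
  set M : ℤ := ∑ i : V, ∑ j : V, (μ i j : ℤ) with hM
  have hM0 : 0 ≤ M := Finset.sum_nonneg fun i _ => Finset.sum_nonneg fun j _ => Int.natCast_nonneg _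
  have hbound : ∀ v : V, ((outdeg μ {v} v : ℕ) : ℤ) ≤ M := by
    intro v
    rw [outdeg]
    push_cast
    calc ∑ j ∈ ({v} : Finset V)ᶜ, (μ v j : ℤ)
        ≤ ∑ j : V, (μ v j : ℤ) := Finset.sum_le_sum_of_subset_of_nonneg (Finset.subset_univ _)
          (fun j _ _ => Int.natCast_nonneg _)
      _ ≤ M := Finset.single_le_sum (f := fun i => ∑ j : V, (μ i j : ℤ))
          (fun i _ => Finset.sum_nonneg fun j _ => Int.natCast_nonneg _) (Finset.mem_univ v)
  refine Set.Finite.subset (Set.Finite.pi (fun v : V => Set.finite_Icc (-1 : ℤ) M)) ?_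
  rintro f ⟨h1, h2, h3⟩
  rw [Set.mem_univ_pi]
  intro v
  rw [Set.mem_Icc]
  by_cases hv : v = r
  · subst hv; rw [h1]; exact ⟨le_refl _, by linarith⟩
  · refine ⟨le_trans (by norm_num) (h2 v hv), ?_⟩
    obtain ⟨i, hi, hlt⟩ := h3 {v} ⟨v, Finset.mem_singleton_self v⟩
      (by simp only [Finset.mem_singleton]; exact fun h => hv h.symm)
    rw [Finset.mem_singleton] at hi
    subst hi
    exact le_trans hlt.le (hbound _)

private lemma Qpoly_eq {V : Type*} [Fintype V] [DecidableEq V] (μ : V → V → ℕ) (r : V) :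
    Qpoly μ r = ∑ f ∈ (parking_finite μ r).toFinset,
      (Polynomial.X : Polynomial ℤ) ^ (∑ v ∈ Finset.univ.erase r, f v).toNat := by
  rw [Qpoly, ← finsum_mem_coe_finset, Set.Finite.coe_toFinset]

private lemma outdeg_subtype {V : Type*} [Fintype V] [DecidableEq V] (μ : V → V → ℕ)
    (W : Finset V) (I : Finset {x // x ∈ W}) (i : {x // x ∈ W}) :
    outdeg (fun u w : {x // x ∈ W} => μ u w) I i
      = ∑ j ∈ W \ I.map (Function.Embedding.subtype _), μ i j := by
  have hm := Finset.sum_map Iᶜ (Function.Embedding.subtype (· ∈ W)) (fun j => μ i j)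
  simp only [Function.Embedding.coe_subtype] at hm
  rw [outdeg, ← hm]
  congr 1
  ext x
  simp only [Finset.mem_map, Finset.mem_compl, Finset.mem_sdiff,
    Function.Embedding.coe_subtype, Subtype.exists]
  constructor
  · rintro ⟨aa, h, hnI, rfl⟩
    exact ⟨h, fun ⟨a', h', hI, he⟩ => by subst he; exact hnI hI⟩
  · rintro ⟨hxW, hn⟩
    exact ⟨x, hxW, fun hI => hn ⟨x, hxW, hI, rfl⟩, rfl⟩

private lemma sum_erase_subtype {V : Type*} [Fintype V] [DecidableEq V] (W : Finset V)
    (w : V) (hw : w ∈ W) (f : V → ℤ) :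
    ∑ v ∈ (Finset.univ : Finset {x // x ∈ W}).erase ⟨w, hw⟩, f ↑v = ∑ v ∈ W.erase w, f v := by
  have hm := Finset.sum_map ((Finset.univ : Finset {x // x ∈ W}).erase ⟨w, hw⟩)
    (Function.Embedding.subtype (· ∈ W)) f
  simp only [Function.Embedding.coe_subtype] at hm
  rw [← hm]
  congr 1
  ext x
  simp only [Finset.mem_map, Finset.mem_erase, Finset.mem_univ, and_true,
    Function.Embedding.coe_subtype, Subtype.exists]
  constructor
  · rintro ⟨a, h, hne, rfl⟩
    exact ⟨fun he => hne (Subtype.ext he), h⟩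
  · rintro ⟨hne, hx⟩
    exact ⟨x, hx, fun he => hne (congrArg Subtype.val he), rfl⟩

/-- Bridge decomposition: if `e = {a,b}` is a bridge of the connected multigraph `H`
rooted at `r`, whose deletion splits the support graph into connected pieces with
vertex sets `V₁ ∋ r, a` and `V₂ ∋ b`, and `H₁`, `H₂` are the restrictions of `μ` to
`V₁`, `V₂`, then `Q_{H,r}(q) = Q_{H₁,r}(q) ⬝ Q_{H₂,b}(q)`. -/
theorem parking_bridge_decomposition {V : Type*} [Fintype V] [DecidableEq V]
    (μ : V → V → ℕ) (hsym : ∀ i j, μ i j = μ j i)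
    (hconn : (supportGraph μ).Connected)
    (r a b : V) (hab : a ≠ b) (hμab : μ a b = 1)
    (V₁ V₂ : Finset V) (hunion : V₁ ∪ V₂ = Finset.univ) (hdisj : Disjoint V₁ V₂)
    (hr : r ∈ V₁) (ha : a ∈ V₁) (hb : b ∈ V₂)
    (hsplit : ∀ u v : V, (supportGraph (deleteEdge μ a b)).Reachable u v ↔
      ((u ∈ V₁ ∧ v ∈ V₁) ∨ (u ∈ V₂ ∧ v ∈ V₂))) :
    Qpoly μ r =
      Qpoly (fun u w : {x // x ∈ V₁} => μ u w) ⟨r, hr⟩ *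
        Qpoly (fun u w : {x // x ∈ V₂} => μ u w) ⟨b, hb⟩ := by
  classical
  set μ₁ : {x // x ∈ V₁} → {x // x ∈ V₁} → ℕ := fun u w => μ u w with hμ₁
  set μ₂ : {x // x ∈ V₂} → {x // x ∈ V₂} → ℕ := fun u w => μ u w with hμ₂
  have hdf : ∀ x : V, x ∈ V₁ → x ∈ V₂ → False := fun x h1 h2 =>
    Finset.disjoint_left.mp hdisj h1 h2
  have hmem : ∀ v : V, v ∈ V₁ ∨ v ∈ V₂ := fun v => by
    have h := Finset.mem_univ v
    rw [← hunion] at h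
    exact Finset.mem_union.mp h
  have hrV₂ : r ∉ V₂ := fun h => hdf r hr h
  have haV₂ : a ∉ V₂ := fun h => hdf a ha h
  have hbV₁ : b ∉ V₁ := fun h => hdf b h hb
  have hrb : b ≠ r := fun h => hrV₂ (h ▸ hb)
  -- the bridge is the only edge between V₁ and V₂
  have hzero : ∀ u ∈ V₁, ∀ v ∈ V₂, ¬(u = a ∧ v = b) → μ u v = 0 := by
    intro u hu v hv hne
    by_contra h
    have h1 : 1 ≤ μ u v := Nat.one_le_iff_ne_zero.mpr h
    have huv : u ≠ v := fun h' => hdf u hu (h' ▸ hv)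
    have hub : u ≠ b := fun h' => hdf u hu (h' ▸ hb)
    have hva : v ≠ a := fun h' => hdf a ha (h' ▸ hv)
    have hd1 : deleteEdge μ a b u v = μ u v := by
      simp only [deleteEdge]
      rw [if_neg, Nat.sub_zero]
      rintro (⟨h1', h2'⟩ | ⟨h1', h2'⟩)
      · exact hne ⟨h1', h2'⟩
      · exact hub h1'
    have hd2 : deleteEdge μ a b v u = μ v u := by
      simp only [deleteEdge]
      rw [if_neg, Nat.sub_zero]
      rintro (⟨h1', h2'⟩ | ⟨h1', h2'⟩)
      · exact hva h1'
      · exact hne ⟨h2', h1'⟩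
    have hadj : (supportGraph (deleteEdge μ a b)).Adj u v :=
      ⟨huv, by rw [hd1]; exact h1, by rw [hd2, ← hsym u v]; exact h1⟩
    have := (hsplit u v).mp hadj.reachable
    rcases this with ⟨_, hv1⟩ | ⟨hu2, _⟩
    · exact hdf v hv1 hv
    · exact hdf u hu hu2
  -- sums across the cut
  have key₁ : ∀ i ∈ V₁, ∀ J : Finset V, J ⊆ V₂ →
      ∑ j ∈ J, μ i j = if i = a ∧ b ∈ J then 1 else 0 := by
    intro i hi J hJ
    by_cases hc : i = a ∧ b ∈ J
    · rw [if_pos hc]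
      obtain ⟨rfl, hbJ⟩ := hc
      rw [Finset.sum_eq_single_of_mem b hbJ]
      · exact hμab
      · intro j hj hjb
        exact hzero i hi j (hJ hj) (fun hh => hjb hh.2)
    · rw [if_neg hc]
      refine Finset.sum_eq_zero fun j hj => ?_
      refine hzero i hi j (hJ hj) (fun hh => hc ⟨hh.1, hh.2 ▸ hj⟩)
  have key₂ : ∀ i ∈ V₂, ∀ J : Finset V, J ⊆ V₁ →
      ∑ j ∈ J, μ i j = if i = b ∧ a ∈ J then 1 else 0 := by
    intro i hi J hJ
    by_cases hc : i = b ∧ a ∈ J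
    · rw [if_pos hc]
      obtain ⟨rfl, haJ⟩ := hc
      rw [Finset.sum_eq_single_of_mem a haJ]
      · rw [← hsym a i]; exact hμab
      · intro j hj hja
        rw [hsym i j]
        exact hzero j (hJ hj) i hi (fun hh => hja hh.1)
    · rw [if_neg hc]
      refine Finset.sum_eq_zero fun j hj => ?_
      rw [hsym i j]
      refine hzero j (hJ hj) i hi (fun hh => hc ⟨hh.2, hh.1 ▸ hj⟩)
  -- decomposition of outdeg
  have hod : ∀ (I : Finset V) (i : V),
      outdeg μ I i = ∑ j ∈ V₁ \ I, μ i j + ∑ j ∈ V₂ \ I, μ i j := by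
    intro I i
    rw [outdeg, ← Finset.sum_union (hdisj.mono Finset.sdiff_subset Finset.sdiff_subset)]
    congr 1
    ext j
    simp only [Finset.mem_compl, Finset.mem_union, Finset.mem_sdiff]
    have := hmem j
    tauto
  -- every parking function vanishes at b
  have hfb : ∀ f : V → ℤ, IsParking μ r f → f b = 0 := by
    intro f hf
    obtain ⟨i, hi, hlt⟩ := hf.2.2 V₂ ⟨b, hb⟩ hrV₂
    rw [hod] at hlt
    rw [Finset.sdiff_self, Finset.sum_empty, add_zero,
      key₂ i hi (V₁ \ V₂) Finset.sdiff_subset] at hlt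
    by_cases hib : i = b
    · subst hib
      rw [if_pos ⟨rfl, Finset.mem_sdiff.mpr ⟨ha, haV₂⟩⟩] at hlt
      have h0 : 0 ≤ f i := hf.2.1 i (fun h => hrV₂ (h ▸ hi))
      omega
    · rw [if_neg (fun hh => hib hh.1)] at hlt
      have h0 : 0 ≤ f i := hf.2.1 i (fun h => hrV₂ (h ▸ hi))
      omega
  -- transfer helpers for subtype parking conditions
  have useF₁ : ∀ (f₁ : {x // x ∈ V₁} → ℤ), IsParking μ₁ ⟨r, hr⟩ f₁ →
      ∀ J : Finset V, J ⊆ V₁ → J.Nonempty → r ∉ J →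
      ∃ i, i ∈ J ∧ ∃ h : i ∈ V₁, f₁ ⟨i, h⟩ < ((∑ j ∈ V₁ \ J, μ i j : ℕ) : ℤ) := by
    intro f₁ hf₁ J hJV hJne hrJ
    set Js : Finset {x // x ∈ V₁} := J.subtype (· ∈ V₁) with hJs
    have hne : Js.Nonempty := by
      obtain ⟨x, hx⟩ := hJne
      exact ⟨⟨x, hJV hx⟩, Finset.mem_subtype.mpr hx⟩
    have hrJs : (⟨r, hr⟩ : {x // x ∈ V₁}) ∉ Js := fun h => hrJ (Finset.mem_subtype.mp h)
    obtain ⟨i, hiJs, hlt⟩ := hf₁.2.2 Js hne hrJs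
    refine ⟨i.val, Finset.mem_subtype.mp hiJs, i.2, ?_⟩
    rw [outdeg_subtype μ V₁ Js i, hJs, Finset.subtype_map,
      Finset.filter_true_of_mem (fun x hx => hJV hx)] at hlt
    exact hlt
  have useF₂ : ∀ (f₂ : {x // x ∈ V₂} → ℤ), IsParking μ₂ ⟨b, hb⟩ f₂ →
      ∀ J : Finset V, J ⊆ V₂ → J.Nonempty → b ∉ J →
      ∃ i, i ∈ J ∧ ∃ h : i ∈ V₂, f₂ ⟨i, h⟩ < ((∑ j ∈ V₂ \ J, μ i j : ℕ) : ℤ) := by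
    intro f₂ hf₂ J hJV hJne hbJ
    set Js : Finset {x // x ∈ V₂} := J.subtype (· ∈ V₂) with hJs
    have hne : Js.Nonempty := by
      obtain ⟨x, hx⟩ := hJne
      exact ⟨⟨x, hJV hx⟩, Finset.mem_subtype.mpr hx⟩
    have hbJs : (⟨b, hb⟩ : {x // x ∈ V₂}) ∉ Js := fun h => hbJ (Finset.mem_subtype.mp h)
    obtain ⟨i, hiJs, hlt⟩ := hf₂.2.2 Js hne hbJs
    refine ⟨i.val, Finset.mem_subtype.mp hiJs, i.2, ?_⟩
    rw [outdeg_subtype μ V₂ Js i, hJs, Finset.subtype_map,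
      Finset.filter_true_of_mem (fun x hx => hJV hx)] at hlt
    exact hlt
  -- forward direction
  have hfwd : ∀ f : V → ℤ, IsParking μ r f →
      IsParking μ₁ ⟨r, hr⟩ (fun v => f v) ∧
      IsParking μ₂ ⟨b, hb⟩ (fun v => if (v : V) = b then -1 else f v) := by
    intro f hf
    obtain ⟨h1, h2, h3⟩ := hf
    constructor
    · refine ⟨h1, ?_, ?_⟩
      · intro v hv
        exact h2 v.val (fun he => hv (Subtype.ext he))
      · intro I hIne hrI
        set I' : Finset V := I.map (Function.Embedding.subtype _) with hI'
        have hI'V₁ : I' ⊆ V₁ := by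
          intro x hx
          rw [hI', Finset.mem_map] at hx
          obtain ⟨y, _, rfl⟩ := hx
          exact y.2
        have hrI' : r ∉ I' := by
          intro hx
          rw [hI', Finset.mem_map] at hx
          obtain ⟨y, hy, hyr⟩ := hx
          exact hrI (by rwa [show y = ⟨r, hr⟩ from Subtype.ext hyr] at hy)
        have hI'ne : I'.Nonempty := Finset.map_nonempty.mpr hIne
        have hwit : ∃ i, i ∈ I' ∧ f i < ((∑ j ∈ V₁ \ I', μ i j : ℕ) : ℤ) := by
          by_cases haI' : a ∈ I'
          · obtain ⟨i, hiJ, hlt⟩ := h3 (I' ∪ V₂) (hI'ne.mono Finset.subset_union_left)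
              (fun h => (Finset.mem_union.mp h).elim hrI' hrV₂)
            rw [hod] at hlt
            have hV₂J : V₂ \ (I' ∪ V₂) = ∅ :=
              Finset.sdiff_eq_empty_iff_subset.mpr Finset.subset_union_right
            have hV₁J : V₁ \ (I' ∪ V₂) = V₁ \ I' := by
              ext x
              simp only [Finset.mem_sdiff, Finset.mem_union]
              exact ⟨fun ⟨hx1, hx2⟩ => ⟨hx1, fun hxI => hx2 (Or.inl hxI)⟩,
                fun ⟨hx1, hx2⟩ => ⟨hx1, fun hI => hI.elim hx2 (hdf x hx1)⟩⟩
            rw [hV₂J, Finset.sum_empty, add_zero, hV₁J] at hlt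
            rcases Finset.mem_union.mp hiJ with hiI' | hiV₂
            · exact ⟨i, hiI', hlt⟩
            · exfalso
              rw [key₂ i hiV₂ (V₁ \ I') Finset.sdiff_subset,
                if_neg (by rintro ⟨-, hh2⟩; exact (Finset.mem_sdiff.mp hh2).2 haI')] at hlt
              have h0 : 0 ≤ f i := h2 i (fun he => hrV₂ (he ▸ hiV₂))
              omega
          · obtain ⟨i, hiI', hlt⟩ := h3 I' hI'ne hrI'
            rw [hod] at hlt
            rw [key₁ i (hI'V₁ hiI') (V₂ \ I') Finset.sdiff_subset,
              if_neg (by rintro ⟨rfl, -⟩; exact haI' hiI')] at hlt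
            rw [add_zero] at hlt
            exact ⟨i, hiI', hlt⟩
        obtain ⟨i, hiI', hlt⟩ := hwit
        rw [hI', Finset.mem_map] at hiI'
        obtain ⟨y, hyI, rfl⟩ := hiI'
        refine ⟨y, hyI, ?_⟩
        rw [outdeg_subtype μ V₁ I y]
        exact hlt
    · refine ⟨show (if (b : V) = b then (-1 : ℤ) else f b) = -1 by rw [if_pos rfl], ?_, ?_⟩
      · intro v hv
        show (0 : ℤ) ≤ if (v : V) = b then -1 else f v
        rw [if_neg (fun he : (v : V) = b => hv (Subtype.ext he))]
        exact h2 v.val (fun he => hrV₂ (he ▸ v.2))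
      · intro I hIne hbI
        set I' : Finset V := I.map (Function.Embedding.subtype _) with hI'
        have hI'V₂ : I' ⊆ V₂ := by
          intro x hx
          rw [hI', Finset.mem_map] at hx
          obtain ⟨y, _, rfl⟩ := hx
          exact y.2
        have hbI' : b ∉ I' := by
          intro hx
          rw [hI', Finset.mem_map] at hx
          obtain ⟨y, hy, hyb⟩ := hx
          exact hbI (by rwa [show y = ⟨b, hb⟩ from Subtype.ext hyb] at hy)
        have hrI' : r ∉ I' := fun h => hrV₂ (hI'V₂ h)
        have hI'ne : I'.Nonempty := Finset.map_nonempty.mpr hIne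
        obtain ⟨i, hiI', hlt⟩ := h3 I' hI'ne hrI'
        rw [hod] at hlt
        have hib : i ≠ b := fun he => hbI' (he ▸ hiI')
        rw [key₂ i (hI'V₂ hiI') (V₁ \ I') Finset.sdiff_subset,
          if_neg (fun hh => hib hh.1), zero_add] at hlt
        rw [hI', Finset.mem_map] at hiI'
        obtain ⟨y, hyI, rfl⟩ := hiI'
        refine ⟨y, hyI, ?_⟩
        simp only [Function.Embedding.coe_subtype] at hlt hib
        show (if (y : V) = b then (-1 : ℤ) else f y) < _
        rw [outdeg_subtype μ V₂ I y, if_neg hib]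
        exact hlt
  -- backward direction
  have hbwd : ∀ (f₁ : {x // x ∈ V₁} → ℤ) (f₂ : {x // x ∈ V₂} → ℤ),
      IsParking μ₁ ⟨r, hr⟩ f₁ → IsParking μ₂ ⟨b, hb⟩ f₂ →
      IsParking μ r (fun v => if h : v ∈ V₁ then f₁ ⟨v, h⟩
        else if v = b then 0 else f₂ ⟨v, (hmem v).resolve_left h⟩) := by
    intro f₁ f₂ hf₁ hf₂
    set g : V → ℤ := fun v => if h : v ∈ V₁ then f₁ ⟨v, h⟩
        else if v = b then 0 else f₂ ⟨v, (hmem v).resolve_left h⟩ with hg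
    have hg1 : ∀ (v) (h : v ∈ V₁), g v = f₁ ⟨v, h⟩ := fun v h => dif_pos h
    have hgb : g b = 0 := by
      simp only [hg]
      rw [dif_neg hbV₁]
      simp
    have hg2 : ∀ (v) (h : v ∉ V₁), v ≠ b → g v = f₂ ⟨v, (hmem v).resolve_left h⟩ := by
      intro v h hvb
      simp only [hg]
      rw [dif_neg h, if_neg hvb]
    refine ⟨by rw [hg1 r hr]; exact hf₁.1, ?_, ?_⟩
    · intro v hv
      by_cases h : v ∈ V₁
      · rw [hg1 v h]
        exact hf₁.2.1 _ (fun he => hv (congrArg Subtype.val he))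
      · by_cases hvb : v = b
        · subst hvb
          rw [hgb]
        · rw [hg2 v h hvb]
          exact hf₂.2.1 _ (fun he => hvb (congrArg Subtype.val he))
    · intro I hIne hrI
      by_cases hbI : b ∈ I
      · by_cases haI : a ∈ I
        · obtain ⟨i, hiJ, hiV₁, hlt⟩ := useF₁ f₁ hf₁ (I ∩ V₁) Finset.inter_subset_right
            ⟨a, Finset.mem_inter.mpr ⟨haI, ha⟩⟩ (fun h => hrI (Finset.mem_inter.mp h).1)
          have hVI : V₁ \ (I ∩ V₁) = V₁ \ I := by
            ext x
            simp only [Finset.mem_sdiff, Finset.mem_inter]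
            tauto
          rw [hVI] at hlt
          refine ⟨i, (Finset.mem_inter.mp hiJ).1, ?_⟩
          rw [hod, hg1 i hiV₁]
          push_cast
          have h0 : (0:ℤ) ≤ ∑ j ∈ V₂ \ I, (μ i j : ℤ) :=
            Finset.sum_nonneg fun j _ => Int.natCast_nonneg _
          push_cast at hlt
          linarith
        · refine ⟨b, hbI, ?_⟩
          rw [hod, hgb]
          have h1' : 1 ≤ ∑ j ∈ V₁ \ I, μ b j := by
            rw [key₂ b hb (V₁ \ I) Finset.sdiff_subset,
              if_pos ⟨rfl, Finset.mem_sdiff.mpr ⟨ha, haI⟩⟩]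
          have h2' : 0 < ∑ j ∈ V₁ \ I, μ b j + ∑ j ∈ V₂ \ I, μ b j := by omega
          exact_mod_cast h2'
      · by_cases hI₂ : (I ∩ V₂).Nonempty
        · obtain ⟨i, hiJ, hiV₂, hlt⟩ := useF₂ f₂ hf₂ (I ∩ V₂) Finset.inter_subset_right hI₂
            (fun h => hbI (Finset.mem_inter.mp h).1)
          have hiI : i ∈ I := (Finset.mem_inter.mp hiJ).1
          have hib : i ≠ b := fun he => hbI (he ▸ hiI)
          have hiV₁ : i ∉ V₁ := fun h => hdf i h hiV₂
          have hVI : V₂ \ (I ∩ V₂) = V₂ \ I := by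
            ext x
            simp only [Finset.mem_sdiff, Finset.mem_inter]
            tauto
          rw [hVI] at hlt
          refine ⟨i, hiI, ?_⟩
          rw [hod, hg2 i hiV₁ hib]
          push_cast
          have h0 : (0:ℤ) ≤ ∑ j ∈ V₁ \ I, (μ i j : ℤ) :=
            Finset.sum_nonneg fun j _ => Int.natCast_nonneg _
          push_cast at hlt
          linarith
        · have hIV₁ : I ⊆ V₁ := fun x hx => (hmem x).resolve_right
            (fun hxV₂ => hI₂ ⟨x, Finset.mem_inter.mpr ⟨hx, hxV₂⟩⟩)
          obtain ⟨i, hiI, hiV₁, hlt⟩ := useF₁ f₁ hf₁ I hIV₁ hIne hrI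
          refine ⟨i, hiI, ?_⟩
          rw [hod, hg1 i hiV₁]
          push_cast
          have h0 : (0:ℤ) ≤ ∑ j ∈ V₂ \ I, (μ i j : ℤ) :=
            Finset.sum_nonneg fun j _ => Int.natCast_nonneg _
          push_cast at hlt
          linarith
  -- exponent decomposition
  have hexp : ∀ f : V → ℤ, IsParking μ r f →
      (∑ v ∈ Finset.univ.erase r, f v).toNat
        = (∑ v ∈ (Finset.univ : Finset {x // x ∈ V₁}).erase ⟨r, hr⟩, f ↑v).toNat
          + (∑ v ∈ (Finset.univ : Finset {x // x ∈ V₂}).erase ⟨b, hb⟩,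
              (if (v : V) = b then (-1 : ℤ) else f ↑v)).toNat := by
    intro f hf
    have h1s : ∑ v ∈ (Finset.univ : Finset {x // x ∈ V₁}).erase ⟨r, hr⟩, f ↑v
        = ∑ v ∈ V₁.erase r, f v := sum_erase_subtype V₁ r hr f
    have h2s : ∑ v ∈ (Finset.univ : Finset {x // x ∈ V₂}).erase ⟨b, hb⟩,
        (if (v : V) = b then (-1 : ℤ) else f ↑v) = ∑ v ∈ V₂.erase b, f v := by
      calc ∑ v ∈ (Finset.univ : Finset {x // x ∈ V₂}).erase ⟨b, hb⟩,
            (if (v : V) = b then (-1 : ℤ) else f ↑v)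
          = ∑ v ∈ V₂.erase b, (if v = b then (-1 : ℤ) else f v) :=
            sum_erase_subtype V₂ b hb (fun x => if x = b then (-1 : ℤ) else f x)
        _ = ∑ v ∈ V₂.erase b, f v :=
            Finset.sum_congr rfl (fun x hx => if_neg (Finset.ne_of_mem_erase hx))
    have hU : (Finset.univ : Finset V).erase r = V₁.erase r ∪ V₂ := by
      ext x
      simp only [Finset.mem_erase, Finset.mem_univ, and_true, Finset.mem_union]
      constructor
      · intro hx
        rcases hmem x with h | h
        · exact Or.inl ⟨hx, h⟩
        · exact Or.inr h
      · rintro (⟨hx, -⟩ | h)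
        · exact hx
        · exact fun he => hrV₂ (he ▸ h)
    have hdisjE : Disjoint (V₁.erase r) V₂ := hdisj.mono (Finset.erase_subset _ _) le_rfl
    have hV₂sum : ∑ v ∈ V₂, f v = ∑ v ∈ V₂.erase b, f v := by
      rw [← Finset.sum_erase_add V₂ f hb, hfb f hf, add_zero]
    rw [hU, Finset.sum_union hdisjE, hV₂sum, h1s, h2s]
    have hA : 0 ≤ ∑ v ∈ V₁.erase r, f v :=
      Finset.sum_nonneg fun v hv => hf.2.1 v (Finset.ne_of_mem_erase hv)
    have hB : 0 ≤ ∑ v ∈ V₂.erase b, f v :=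
      Finset.sum_nonneg fun v hv =>
        hf.2.1 v (fun he => hrV₂ (he ▸ Finset.mem_of_mem_erase hv))
    exact Int.toNat_add hA hB
  -- assemble the generating polynomials
  rw [Qpoly_eq μ r, Qpoly_eq μ₁ ⟨r, hr⟩, Qpoly_eq μ₂ ⟨b, hb⟩]
  have main : ∑ f ∈ (parking_finite μ r).toFinset,
        (Polynomial.X : Polynomial ℤ) ^ (∑ v ∈ Finset.univ.erase r, f v).toNat
      = ∑ p ∈ (parking_finite μ₁ ⟨r, hr⟩).toFinset ×ˢ (parking_finite μ₂ ⟨b, hb⟩).toFinset,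
          (Polynomial.X : Polynomial ℤ) ^
              (∑ v ∈ (Finset.univ : Finset {x // x ∈ V₁}).erase ⟨r, hr⟩, p.1 v).toNat
            * (Polynomial.X : Polynomial ℤ) ^
              (∑ v ∈ (Finset.univ : Finset {x // x ∈ V₂}).erase ⟨b, hb⟩, p.2 v).toNat := by
    refine Finset.sum_nbij'
      (fun f => ((fun v : {x // x ∈ V₁} => f ↑v),
        (fun v : {x // x ∈ V₂} => if (v : V) = b then -1 else f ↑v)))
      (fun p => fun v => if h : v ∈ V₁ then p.1 ⟨v, h⟩
        else if v = b then 0 else p.2 ⟨v, (hmem v).resolve_left h⟩)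
      ?_ ?_ ?_ ?_ ?_
    · intro f hfS
      rw [Set.Finite.mem_toFinset] at hfS
      obtain ⟨hp₁, hp₂⟩ := hfwd f hfS
      rw [Finset.mem_product]
      exact ⟨(parking_finite μ₁ ⟨r, hr⟩).mem_toFinset.mpr hp₁,
        (parking_finite μ₂ ⟨b, hb⟩).mem_toFinset.mpr hp₂⟩
    · intro p hp
      rw [Finset.mem_product, Set.Finite.mem_toFinset, Set.Finite.mem_toFinset] at hp
      exact (parking_finite μ r).mem_toFinset.mpr (hbwd p.1 p.2 hp.1 hp.2)
    · intro f hfS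
      rw [Set.Finite.mem_toFinset] at hfS
      funext v
      by_cases h : v ∈ V₁
      · simp only [dif_pos h]
      · by_cases hvb : v = b
        · subst hvb
          simp only [dif_neg h, if_pos rfl]
          exact (hfb f hfS).symm
        · simp only [dif_neg h, if_neg hvb]
    · intro p hp
      rw [Finset.mem_product, Set.Finite.mem_toFinset, Set.Finite.mem_toFinset] at hp
      refine Prod.ext ?_ ?_
      · funext v
        simp only [dif_pos v.2]
      · funext v
        by_cases hvb : (v : V) = b
        · simp only [if_pos hvb]
          rw [show v = ⟨b, hb⟩ from Subtype.ext hvb]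
          exact hp.2.1.symm
        · have hvV₁ : (v : V) ∉ V₁ := fun h => hdf (v : V) h v.2
          simp only [if_neg hvb, dif_neg hvV₁]
    · intro f hfS
      rw [Set.Finite.mem_toFinset] at hfS
      rw [← pow_add]
      congr 1
      exact hexp f hfS
  rw [main, Finset.sum_product]
  rw [Finset.sum_mul_sum]
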